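/- Fix x_1,…,x_n, weights w with (1/n)∑ w_i = 1, and a function g bounded by M with g ∈ Comb(H). Suppose y_1,…,y_n are independent random variables with E[y_i] = g(x_i) and |y_i − g(x_i)| ≤ 2M. Then for any δ ∈ (0,1), with probability at least 1−δ: | (1/n)∑_{i=1}^n w_i y_i − (1/n')∑_{i=n+1}^{n+n'} g(x_i) | ≤ (M/2)·d_H(w) + 2M·sqrt( 2·‖w/n‖₂²·ln(2/δ) ). -/

import Mathlib

set_option maxHeartbeats 1000000


lemma aux_sinh_le {x : ℝ} (hx : 0 ≤ x) : Real.sinh x ≤ x * Real.cosh x := by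
  have h : ∀ z : ℝ, HasDerivAt (fun t => t * Real.cosh t - Real.sinh t)
      (z * Real.sinh z) z := by
    intro z
    have h1 : HasDerivAt (fun t : ℝ => t * Real.cosh t)
        (1 * Real.cosh z + z * Real.sinh z) z :=
      (hasDerivAt_id z).mul (Real.hasDerivAt_cosh z)
    have := h1.sub (Real.hasDerivAt_sinh z)
    exact this.congr_deriv (by ring)
  have hmono : MonotoneOn (fun t => t * Real.cosh t - Real.sinh t) (Set.Ici (0:ℝ)) := by
    apply monotoneOn_of_deriv_nonneg (convex_Ici 0)
      (Continuous.continuousOn (by continuity))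
      (fun z _ => (h z).differentiableAt.differentiableWithinAt)
    intro z hz
    rw [(h z).deriv]
    have hz0 : (0:ℝ) ≤ z := le_of_lt (by simpa using hz)
    exact mul_nonneg hz0 (Real.sinh_nonneg_iff.2 hz0)
  have := hmono (Set.self_mem_Ici) (Set.mem_Ici.2 hx) hx
  simp only [zero_mul, Real.sinh_zero, sub_zero, zero_sub, neg_nonpos] at this
  linarith [this]

lemma aux_cosh_le (x : ℝ) : Real.cosh x ≤ Real.exp (x ^ 2 / 2) := by
  wlog hx : 0 ≤ x with Hw
  · have := Hw (-x) (by linarith [le_of_not_ge hx])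
    simpa using this
  have h : ∀ z : ℝ, HasDerivAt (fun t => t ^ 2 / 2 - Real.log (Real.cosh t))
      (z - Real.sinh z / Real.cosh z) z := by
    intro z
    have h1 : HasDerivAt (fun t : ℝ => t ^ 2 / 2) z z := by
      simpa using ((hasDerivAt_pow 2 z).div_const 2)
    have h2 : HasDerivAt (fun t => Real.log (Real.cosh t)) (Real.sinh z / Real.cosh z) z :=
      (Real.hasDerivAt_cosh z).log (ne_of_gt (Real.cosh_pos z))
    exact h1.sub h2
  have hmono : MonotoneOn (fun t => t ^ 2 / 2 - Real.log (Real.cosh t)) (Set.Ici (0:ℝ)) := by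
    apply monotoneOn_of_deriv_nonneg (convex_Ici 0)
    · apply Continuous.continuousOn
      apply Continuous.sub (by continuity)
      exact Real.continuous_cosh.log (fun z => ne_of_gt (Real.cosh_pos z))
    · exact fun z _ => (h z).differentiableAt.differentiableWithinAt
    · intro z hz
      rw [(h z).deriv]
      have hz0 : (0:ℝ) ≤ z := le_of_lt (by simpa using hz)
      have := aux_sinh_le hz0
      have hc := Real.cosh_pos z
      rw [sub_nonneg, div_le_iff₀ hc]
      linarith
  have hkey := hmono (Set.self_mem_Ici) (Set.mem_Ici.2 hx) hx
  simp only [Real.cosh_zero, Real.log_one] at hkey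
  have hlog : Real.log (Real.cosh x) ≤ x ^ 2 / 2 := by
    norm_num at hkey; linarith
  calc Real.cosh x = Real.exp (Real.log (Real.cosh x)) :=
        (Real.exp_log (Real.cosh_pos x)).symm
    _ ≤ Real.exp (x ^ 2 / 2) := Real.exp_le_exp.2 hlog



open MeasureTheory ProbabilityTheory in
lemma aux_mgf_le {Ω : Type*} [MeasurableSpace Ω] (μ : Measure Ω) [IsProbabilityMeasure μ]
    (X : Ω → ℝ) (hX : Measurable X) (c : ℝ) (hc : 0 ≤ c)
    (hb : ∀ᵐ ω ∂μ, |X ω| ≤ c) (hm : ∫ ω, X ω ∂μ = 0) (t : ℝ) :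
    mgf X μ t ≤ Real.exp (t ^ 2 * c ^ 2 / 2) := by
  have hIntX : Integrable X μ :=
    Integrable.mono' (integrable_const c) hX.aestronglyMeasurable
      (by simpa [Real.norm_eq_abs] using hb)
  rcases eq_or_lt_of_le hc with hc0 | hc0
  · have hX0 : ∀ᵐ ω ∂μ, X ω = 0 := by
      filter_upwards [hb] with ω hω
      rw [← hc0] at hω
      exact abs_nonpos_iff.mp hω
    have : mgf X μ t = 1 := by
      rw [mgf]
      rw [integral_congr_ae (g := fun _ => (1:ℝ)) (by filter_upwards [hX0] with ω hω; simp [hω])]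
      simp
    rw [this]
    have : (0:ℝ) ≤ t ^ 2 * c ^ 2 / 2 := by positivity
    calc (1:ℝ) = Real.exp 0 := by simp
      _ ≤ _ := Real.exp_le_exp.2 this
  · -- c > 0
    set e₁ := Real.exp (-(t * c)) with he₁
    set e₂ := Real.exp (t * c) with he₂
    have hpt : ∀ᵐ ω ∂μ, Real.exp (t * X ω) ≤
        (e₁ + e₂) / 2 + X ω * ((e₂ - e₁) / (2 * c)) := by
      filter_upwards [hb] with ω hω
      have h1 : (0:ℝ) ≤ (c - X ω) / (2 * c) := by
        apply div_nonneg _ (by linarith)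
        have := abs_le.1 hω; linarith
      have h2 : (0:ℝ) ≤ (c + X ω) / (2 * c) := by
        apply div_nonneg _ (by linarith)
        have := abs_le.1 hω; linarith
      have h3 : (c - X ω) / (2 * c) + (c + X ω) / (2 * c) = 1 := by
        field_simp; ring
      have hcvx := convexOn_exp.2 (Set.mem_univ (-(t * c))) (Set.mem_univ (t * c)) h1 h2 h3
      simp only [smul_eq_mul] at hcvx
      have harg : (c - X ω) / (2 * c) * (-(t * c)) + (c + X ω) / (2 * c) * (t * c)
          = t * X ω := by
        field_simp
        ring
      rw [harg] at hcvx
      calc Real.exp (t * X ω) ≤ (c - X ω) / (2 * c) * e₁ + (c + X ω) / (2 * c) * e₂ := hcvx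
        _ = (e₁ + e₂) / 2 + X ω * ((e₂ - e₁) / (2 * c)) := by
            field_simp; ring
    have hIntExp : Integrable (fun ω => Real.exp (t * X ω)) μ := by
      apply Integrable.mono' (integrable_const (Real.exp (|t| * c)))
        ((hX.const_mul t).exp.aestronglyMeasurable)
      filter_upwards [hb] with ω hω
      rw [Real.norm_eq_abs, abs_of_pos (Real.exp_pos _), Real.exp_le_exp]
      calc t * X ω ≤ |t * X ω| := le_abs_self _
        _ = |t| * |X ω| := abs_mul _ _
        _ ≤ |t| * c := by
            exact mul_le_mul_of_nonneg_left hω (abs_nonneg t)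
    have hIntRHS : Integrable (fun ω => (e₁ + e₂) / 2 + X ω * ((e₂ - e₁) / (2 * c))) μ :=
      (integrable_const _).add (hIntX.mul_const _)
    have hle : mgf X μ t ≤ ∫ ω, ((e₁ + e₂) / 2 + X ω * ((e₂ - e₁) / (2 * c))) ∂μ := by
      rw [mgf]
      exact integral_mono_ae hIntExp hIntRHS hpt
    have heq : ∫ ω, ((e₁ + e₂) / 2 + X ω * ((e₂ - e₁) / (2 * c))) ∂μ
        = Real.cosh (t * c) := by
      rw [integral_add (integrable_const _) (hIntX.mul_const _), integral_const,
        integral_mul_const, hm]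
      simp [Real.cosh_eq, he₁, he₂]
      ring
    rw [heq] at hle
    calc mgf X μ t ≤ Real.cosh (t * c) := hle
      _ ≤ Real.exp ((t * c) ^ 2 / 2) := aux_cosh_le _
      _ = Real.exp (t ^ 2 * c ^ 2 / 2) := by rw [mul_pow]



open MeasureTheory ProbabilityTheory in
lemma aux_int_exp {Ω : Type*} [MeasurableSpace Ω] (μ : Measure Ω) [IsProbabilityMeasure μ]
    (X : Ω → ℝ) (hX : Measurable X) (c : ℝ)
    (hb : ∀ᵐ ω ∂μ, |X ω| ≤ c) (t : ℝ) :
    Integrable (fun ω => Real.exp (t * X ω)) μ := by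
  apply Integrable.mono' (integrable_const (Real.exp (|t| * c)))
    ((hX.const_mul t).exp.aestronglyMeasurable)
  filter_upwards [hb] with ω hω
  rw [Real.norm_eq_abs, abs_of_pos (Real.exp_pos _), Real.exp_le_exp]
  calc t * X ω ≤ |t * X ω| := le_abs_self _
    _ = |t| * |X ω| := abs_mul _ _
    _ ≤ |t| * c := mul_le_mul_of_nonneg_left hω (abs_nonneg t)

open MeasureTheory ProbabilityTheory in
lemma aux_hoeffding {Ω : Type*} [MeasurableSpace Ω] (μ : Measure Ω) [IsProbabilityMeasure μ]
    {n : ℕ} (X : Fin n → Ω → ℝ) (hmeas : ∀ i, Measurable (X i))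
    (hind : iIndepFun X μ)
    (c : Fin n → ℝ) (hc : ∀ i, 0 ≤ c i) (hb : ∀ i, ∀ᵐ ω ∂μ, |X i ω| ≤ c i)
    (hm : ∀ i, ∫ ω, X i ω ∂μ = 0) (ε : ℝ) (hε : 0 < ε) (hV : 0 < ∑ i, c i ^ 2) :
    (μ {ω | ε ≤ ∑ i, X i ω}).toReal ≤ Real.exp (-(ε ^ 2) / (2 * ∑ i, c i ^ 2)) := by
  set V := ∑ i, c i ^ 2 with hVdef
  set t := ε / V with htdef
  have ht : 0 < t := div_pos hε hV
  have h_int : Integrable (fun ω => Real.exp (t * (∑ i, X i) ω)) μ :=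
    iIndepFun.integrable_exp_mul_sum hind hmeas
      (fun i _ => aux_int_exp μ (X i) (hmeas i) (c i) (hb i) t)
  have hset : {ω | ε ≤ ∑ i, X i ω} = {ω | ε ≤ (∑ i, X i) ω} := by
    ext ω; simp [Finset.sum_apply]
  have hch := measure_ge_le_exp_mul_mgf (μ := μ) (X := ∑ i, X i) ε ht.le h_int
  rw [← hset] at hch
  have hmgf : mgf (∑ i, X i) μ t ≤ Real.exp (t ^ 2 * V / 2) := by
    rw [iIndepFun.mgf_sum hind hmeas]
    calc ∏ i, mgf (X i) μ t ≤ ∏ i, Real.exp (t ^ 2 * c i ^ 2 / 2) :=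
          Finset.prod_le_prod (fun i _ => mgf_nonneg)
            (fun i _ => aux_mgf_le μ (X i) (hmeas i) (c i) (hc i) (hb i) (hm i) t)
      _ = Real.exp (∑ i, t ^ 2 * c i ^ 2 / 2) := (Real.exp_sum _ _).symm
      _ = Real.exp (t ^ 2 * V / 2) := by
          congr 1
          rw [hVdef, Finset.mul_sum, Finset.sum_div]
  calc (μ {ω | ε ≤ ∑ i, X i ω}).toReal
      ≤ Real.exp (-t * ε) * mgf (∑ i, X i) μ t := hch
    _ ≤ Real.exp (-t * ε) * Real.exp (t ^ 2 * V / 2) := by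
        exact mul_le_mul_of_nonneg_left hmgf (Real.exp_pos _).le
    _ = Real.exp (-(ε ^ 2) / (2 * V)) := by
        rw [← Real.exp_add]
        congr 1
        rw [htdef]
        field_simp
        ring



open MeasureTheory ProbabilityTheory in
/-- Theorem 1: if `g ∈ Comb(H)` is bounded by `M`, the weights `w` are nonnegative
with mean 1, and the outcomes `yᵢ` are independent with mean `g(xᵢ)` and `|yᵢ − g(xᵢ)| ≤ 2M` a.s.,
then with probability at least `1 − δ` the weighted estimation error is bounded by
`(M/2)·d_H(w) + 2M √(2 ‖w/n‖₂² ln(2/δ))`. -/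
theorem stmt_6 {𝒳 Ω : Type*} [MeasurableSpace Ω]
    (μ : Measure Ω) [IsProbabilityMeasure μ]
    (n n' : ℕ) (hn : 0 < n) (hn' : 0 < n')
    (xs : Fin n → 𝒳) (xt : Fin n' → 𝒳) (w : Fin n → ℝ)
    (hw0 : ∀ i, 0 ≤ w i) (hw1 : (1 / (n : ℝ)) * ∑ i, w i = 1)
    (H : Finset (𝒳 → ℝ)) (hne : H.Nonempty)
    (h01 : ∀ h ∈ H, ∀ x, h x = 0 ∨ h x = 1)
    (M : ℝ) (hM : 0 < M) (g : 𝒳 → ℝ) (hgb : ∀ x, |g x| ≤ M)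
    (hg : ∃ (k : ℕ) (α : Fin k → ℝ) (hs : Fin k → 𝒳 → ℝ),
      (∀ j, hs j ∈ H) ∧ (∀ x, g x = ∑ j, α j * hs j x) ∧ (∑ j, |α j|) ≤ M)
    (y : Fin n → Ω → ℝ) (hymeas : ∀ i, Measurable (y i))
    (hyindep : iIndepFun y μ)
    (hymean : ∀ i, ∫ ω, y i ω ∂μ = g (xs i))
    (hybd : ∀ i, ∀ᵐ ω ∂μ, |y i ω - g (xs i)| ≤ 2 * M)
    (δ : ℝ) (hδ : δ ∈ Set.Ioo (0 : ℝ) 1) :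
    ENNReal.ofReal (1 - δ) ≤
      μ {ω | |(1 / (n : ℝ)) * ∑ i, w i * y i ω - (1 / (n' : ℝ)) * ∑ j, g (xt j)| ≤
        (M / 2) * (2 * H.sup' hne fun h =>
          |(1 / (n : ℝ)) * ∑ i, w i * h (xs i) - (1 / (n' : ℝ)) * ∑ j, h (xt j)|) +
        2 * M * Real.sqrt (2 * (∑ i, (w i / n) ^ 2) * Real.log (2 / δ))} := by
  obtain ⟨hδ0, hδ1⟩ := hδ
  have hn0 : (0:ℝ) < n := by exact_mod_cast hn
  set D := H.sup' hne (fun h =>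
    |(1 / (n : ℝ)) * ∑ i, w i * h (xs i) - (1 / (n' : ℝ)) * ∑ j, h (xt j)|) with hDdef
  have hD0 : 0 ≤ D := by
    have h1 := Finset.le_sup' (f := fun h : 𝒳 → ℝ =>
      |(1 / (n : ℝ)) * ∑ i, w i * h (xs i) - (1 / (n' : ℝ)) * ∑ j, h (xt j)|) hne.choose_spec
    exact le_trans (abs_nonneg _) h1
  set W := ∑ i, (w i / (n:ℝ)) ^ 2 with hWdef
  have hL : 0 < Real.log (2 / δ) := Real.log_pos (by rw [lt_div_iff₀ hδ0]; linarith)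
  set L := Real.log (2 / δ) with hLdef
  -- W positive
  have hsumw : ∑ i, w i = (n:ℝ) := by
    field_simp at hw1; linarith
  have hW : 0 < W := by
    by_contra hWn
    push_neg at hWn
    have hall : ∀ i ∈ Finset.univ, (w i / (n:ℝ)) ^ 2 = 0 := by
      intro i _
      have h1 : (0:ℝ) ≤ (w i / (n:ℝ)) ^ 2 := sq_nonneg _
      have h2 : (w i / (n:ℝ)) ^ 2 ≤ 0 := by
        have := Finset.single_le_sum (f := fun i => (w i / (n:ℝ)) ^ 2)
          (fun i _ => sq_nonneg _) (Finset.mem_univ i)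
        linarith
      linarith
    have : ∀ i, w i = 0 := by
      intro i
      have := hall i (Finset.mem_univ i)
      have := pow_eq_zero_iff (n := 2) (by norm_num) |>.1 this
      field_simp at this
      simpa using this
    simp [this] at hsumw
    linarith
  -- the centered variables
  set X : Fin n → Ω → ℝ := fun i ω => (w i / n) * (y i ω - g (xs i)) with hXdef
  set c : Fin n → ℝ := fun i => (w i / n) * (2 * M) with hcdef
  have hXmeas : ∀ i, Measurable (X i) :=
    fun i => ((hymeas i).sub measurable_const).const_mul _
  have hXind : iIndepFun X μ := by
    have := hyindep.comp (fun i (x : ℝ) => (w i / n) * (x - g (xs i)))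
      (fun i => (measurable_id.sub measurable_const).const_mul _)
    exact this
  have hc0 : ∀ i, 0 ≤ c i := fun i => by
    have : 0 ≤ w i / (n:ℝ) := div_nonneg (hw0 i) hn0.le
    positivity
  have hXb : ∀ i, ∀ᵐ ω ∂μ, |X i ω| ≤ c i := by
    intro i
    filter_upwards [hybd i] with ω hω
    rw [hXdef]
    simp only
    rw [abs_mul, abs_of_nonneg (div_nonneg (hw0 i) hn0.le)]
    exact mul_le_mul_of_nonneg_left hω (div_nonneg (hw0 i) hn0.le)
  have hyint : ∀ i, Integrable (y i) μ := by
    intro i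
    apply Integrable.mono' (integrable_const (2 * M + M)) (hymeas i).aestronglyMeasurable
    filter_upwards [hybd i] with ω hω
    rw [Real.norm_eq_abs]
    calc |y i ω| = |(y i ω - g (xs i)) + g (xs i)| := by ring_nf
      _ ≤ |y i ω - g (xs i)| + |g (xs i)| := abs_add_le _ _
      _ ≤ 2 * M + M := add_le_add hω (hgb _)
  have hXm : ∀ i, ∫ ω, X i ω ∂μ = 0 := by
    intro i
    rw [hXdef]
    simp only
    rw [integral_const_mul, integral_sub (hyint i) (integrable_const _),
      hymean i, integral_const]
    simp
  -- V = sum of c i ^ 2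
  have hVW : ∑ i, c i ^ 2 = 4 * M ^ 2 * W := by
    rw [hWdef, Finset.mul_sum]
    apply Finset.sum_congr rfl
    intro i _
    rw [hcdef]; ring
  have hV : 0 < ∑ i, c i ^ 2 := by rw [hVW]; positivity
  set ε := 2 * M * Real.sqrt (2 * W * L) with hεdef
  have hε : 0 < ε := by
    apply mul_pos (by linarith)
    exact Real.sqrt_pos.2 (by positivity)
  have hεsq : ε ^ 2 = 4 * M ^ 2 * (2 * W * L) := by
    rw [hεdef, mul_pow, Real.sq_sqrt (by positivity)]
    ring
  have hexp : Real.exp (-(ε ^ 2) / (2 * ∑ i, c i ^ 2)) = δ / 2 := by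
    rw [hVW, hεsq]
    have harg : -(4 * M ^ 2 * (2 * W * L)) / (2 * (4 * M ^ 2 * W)) = -L := by
      field_simp
    rw [harg, hLdef, Real.exp_neg, Real.exp_log (by positivity), inv_div]
  -- tail bounds
  have htailp := aux_hoeffding μ X hXmeas hXind c hc0 hXb hXm ε hε hV
  have hXnegind : iIndepFun (fun i ω => -X i ω) μ := by
    have := hXind.comp (fun _ (x : ℝ) => -x) (fun _ => measurable_neg)
    exact this
  have htailm := aux_hoeffding μ (fun i ω => -X i ω)
    (fun i => (hXmeas i).neg) hXnegind c hc0
    (fun i => by filter_upwards [hXb i] with ω hω; simpa using hω)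
    (fun i => by rw [integral_neg, hXm i, neg_zero]) ε hε hV
  rw [hexp] at htailp htailm
  have hsetneg : {ω | ε ≤ ∑ i, -X i ω} = {ω | ε ≤ -∑ i, X i ω} := by
    ext ω; simp
  rw [hsetneg] at htailm
  -- convert toReal bounds to ENNReal bounds
  have hmup : μ {ω | ε ≤ ∑ i, X i ω} ≤ ENNReal.ofReal (δ / 2) :=
    (ENNReal.le_ofReal_iff_toReal_le (measure_ne_top μ _) (by linarith)).2 htailp
  have hmum : μ {ω | ε ≤ -∑ i, X i ω} ≤ ENNReal.ofReal (δ / 2) :=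
    (ENNReal.le_ofReal_iff_toReal_le (measure_ne_top μ _) (by linarith)).2 htailm
  -- deterministic bound
  obtain ⟨k, α, hs, hmem, hrep, hsum⟩ := hg
  have hdet : |(1 / (n : ℝ)) * ∑ i, w i * g (xs i) - (1 / (n' : ℝ)) * ∑ j, g (xt j)|
      ≤ M * D := by
    have hswap : (1 / (n : ℝ)) * ∑ i, w i * g (xs i) - (1 / (n' : ℝ)) * ∑ j, g (xt j)
        = ∑ jj : Fin k, α jj * ((1 / (n : ℝ)) * ∑ i, w i * hs jj (xs i)
          - (1 / (n' : ℝ)) * ∑ j, hs jj (xt j)) := by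
      simp only [hrep, Finset.mul_sum]
      have e1 : ∑ x : Fin n, ∑ i : Fin k, 1 / (n:ℝ) * (w x * (α i * hs i (xs x)))
          = ∑ i : Fin k, ∑ x : Fin n, 1 / (n:ℝ) * (w x * (α i * hs i (xs x))) :=
        Finset.sum_comm
      have e2 : ∑ x : Fin n', ∑ i : Fin k, 1 / (n':ℝ) * (α i * hs i (xt x))
          = ∑ i : Fin k, ∑ x : Fin n', 1 / (n':ℝ) * (α i * hs i (xt x)) :=
        Finset.sum_comm
      rw [e1, e2, ← Finset.sum_sub_distrib]
      refine Finset.sum_congr rfl fun jj _ => ?_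
      rw [mul_sub, Finset.mul_sum, Finset.mul_sum]
      congr 1 <;> exact Finset.sum_congr rfl fun i _ => by ring
    rw [hswap]
    calc |∑ jj : Fin k, α jj * ((1 / (n : ℝ)) * ∑ i, w i * hs jj (xs i)
          - (1 / (n' : ℝ)) * ∑ j, hs jj (xt j))|
        ≤ ∑ jj : Fin k, |α jj * ((1 / (n : ℝ)) * ∑ i, w i * hs jj (xs i)
          - (1 / (n' : ℝ)) * ∑ j, hs jj (xt j))| := Finset.abs_sum_le_sum_abs _ _
      _ ≤ ∑ jj : Fin k, |α jj| * D := by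
          apply Finset.sum_le_sum
          intro jj _
          rw [abs_mul]
          have h1 := Finset.le_sup' (f := fun h : 𝒳 → ℝ =>
              |(1 / (n : ℝ)) * ∑ i, w i * h (xs i) - (1 / (n' : ℝ)) * ∑ j, h (xt j)|)
              (hmem jj)
          exact mul_le_mul_of_nonneg_left h1 (abs_nonneg _)
      _ = (∑ jj : Fin k, |α jj|) * D := by rw [Finset.sum_mul]
      _ ≤ M * D := mul_le_mul_of_nonneg_right hsum hD0
  -- the target set contains the good event
  set A := {ω | |(1 / (n : ℝ)) * ∑ i, w i * y i ω - (1 / (n' : ℝ)) * ∑ j, g (xt j)| ≤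
        (M / 2) * (2 * D) + ε} with hAdef
  have hsub : {ω | ε ≤ ∑ i, X i ω}ᶜ ∩ {ω | ε ≤ -∑ i, X i ω}ᶜ ⊆ A := by
    intro ω hω
    obtain ⟨h1, h2⟩ := hω
    simp only [Set.mem_compl_iff, Set.mem_setOf_eq, not_le] at h1 h2
    have hSabs : |∑ i, X i ω| ≤ ε := abs_le.2 ⟨by linarith, by linarith⟩
    have hsplit : (1 / (n : ℝ)) * ∑ i, w i * y i ω
        = (∑ i, X i ω) + (1 / (n : ℝ)) * ∑ i, w i * g (xs i) := by
      rw [hXdef, Finset.mul_sum, Finset.mul_sum, ← Finset.sum_add_distrib]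
      apply Finset.sum_congr rfl
      intro i _
      simp only
      field_simp
      ring
    rw [hAdef]
    simp only [Set.mem_setOf_eq]
    rw [hsplit]
    calc |(∑ i, X i ω) + (1 / (n : ℝ)) * ∑ i, w i * g (xs i)
          - (1 / (n' : ℝ)) * ∑ j, g (xt j)|
        ≤ |∑ i, X i ω| + |(1 / (n : ℝ)) * ∑ i, w i * g (xs i)
          - (1 / (n' : ℝ)) * ∑ j, g (xt j)| := by
          rw [add_sub_assoc]; exact abs_add_le _ _
      _ ≤ ε + M * D := add_le_add hSabs hdet
      _ = (M / 2) * (2 * D) + ε := by ring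
  have hAmeas : MeasurableSet A := by
    apply measurableSet_le _ measurable_const
    apply Measurable.abs
    apply Measurable.sub _ measurable_const
    exact (Finset.measurable_sum _ (fun i _ => (hymeas i).const_mul _)).const_mul _
  have hcompl : μ Aᶜ ≤ ENNReal.ofReal δ := by
    have hsub' : Aᶜ ⊆ {ω | ε ≤ ∑ i, X i ω} ∪ {ω | ε ≤ -∑ i, X i ω} := by
      intro ω hω
      by_contra hcon
      simp only [Set.mem_union, not_or] at hcon
      exact hω (hsub ⟨hcon.1, hcon.2⟩)
    calc μ Aᶜ ≤ μ ({ω | ε ≤ ∑ i, X i ω} ∪ {ω | ε ≤ -∑ i, X i ω}) := measure_mono hsub'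
      _ ≤ μ {ω | ε ≤ ∑ i, X i ω} + μ {ω | ε ≤ -∑ i, X i ω} := measure_union_le _ _
      _ ≤ ENNReal.ofReal (δ / 2) + ENNReal.ofReal (δ / 2) := add_le_add hmup hmum
      _ = ENNReal.ofReal δ := by
          rw [← ENNReal.ofReal_add (by linarith) (by linarith)]
          norm_num
  have hfinal : ENNReal.ofReal (1 - δ) ≤ μ A := by
    have h1 : ENNReal.ofReal (1 - δ) = 1 - ENNReal.ofReal δ := by
      rw [← ENNReal.ofReal_one, ← ENNReal.ofReal_sub _ hδ0.le]
    rw [h1]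
    have h2 : μ Aᶜ = 1 - μ A := prob_compl_eq_one_sub hAmeas
    have h3 : 1 - ENNReal.ofReal δ ≤ 1 - μ Aᶜ := tsub_le_tsub_left hcompl 1
    rw [h2] at h3
    rwa [ENNReal.sub_sub_cancel ENNReal.one_ne_top prob_le_one] at h3
  exact hfinal
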